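/- Let A be a Noetherian local ring with maximal ideal m and M, N finitely generated A-modules. If the m-adic completions M̂ and N̂ are isomorphic as Â-modules, then M ≅ N. -/

import Mathlib

set_option linter.unusedSectionVars false

open TensorProduct LinearMap

section HomBaseChange

variable {R : Type} [CommRing R]
variable (B : Type) [CommRing B] [Algebra R B]
variable {M N : Type} [AddCommGroup M] [Module R M] [AddCommGroup N] [Module R N]

lemma psi_tmul (b : B) (h : M →ₗ[R] N) :
    LinearMap.tensorProduct R B M N (b ⊗ₜ h) = b • h.baseChange B := by
  simp [LinearMap.tensorProduct]

/-- `y ↦ (x ↦ x j • y)` as a linear map. -/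
noncomputable def sjMap (q : ℕ) (j : Fin q) : N →ₗ[R] ((Fin q → R) →ₗ[R] N) where
  toFun y := (LinearMap.proj j).smulRight y
  map_add' y z := by ext x; simp
  map_smul' c y := LinearMap.ext fun x => by
    simp only [smulRight_apply, proj_apply, RingHom.id_apply, LinearMap.smul_apply]
    exact smul_comm _ _ _

lemma sum_sjMap (q : ℕ) (h : (Fin q → R) →ₗ[R] N) :
    ∑ j, sjMap (N := N) q j (h (Pi.single j 1)) = h := by
  apply (Pi.basisFun R (Fin q)).ext
  intro j
  simp [sjMap, Pi.single_apply]

lemma single_sum (q : ℕ) (x : Fin q → R) : x = ∑ j, x j • (Pi.single j 1 : Fin q → R) := by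
  conv_lhs => rw [← Finset.univ_sum_single x]
  refine Finset.sum_congr rfl fun j _ => ?_
  ext k
  simp [Pi.single_apply, eq_comm]

lemma psi_sjMap_apply (q : ℕ) (j : Fin q) (t : B ⊗[R] N) (x : Fin q → R) :
    LinearMap.tensorProduct R B (Fin q → R) N
      ((sjMap q j).baseChange B t) ((1 : B) ⊗ₜ x) = x j • t := by
  induction t with
  | zero => simp
  | tmul c y =>
      simp only [baseChange_tmul, psi_tmul, LinearMap.smul_apply, baseChange_tmul]
      rw [show (sjMap (N := N) q j y) x = x j • y from rfl]
      rw [tmul_smul, smul_comm, smul_tmul', smul_eq_mul, mul_one]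
  | add a b ha hb =>
      rw [map_add, map_add, LinearMap.add_apply, ha, hb, smul_add]

lemma psi_free_bijective (q : ℕ) :
    Function.Bijective (LinearMap.tensorProduct R B (Fin q → R) N) := by
  let inv : ((B ⊗[R] (Fin q → R)) →ₗ[B] B ⊗[R] N) → B ⊗[R] ((Fin q → R) →ₗ[R] N) :=
    fun φ => ∑ j, (sjMap (N := N) q j).baseChange B (φ ((1 : B) ⊗ₜ Pi.single j 1))
  have hadd : ∀ φ φ', inv (φ + φ') = inv φ + inv φ' := by
    intro φ φ'
    simp [inv, Finset.sum_add_distrib]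
  have left : ∀ x, inv (LinearMap.tensorProduct R B (Fin q → R) N x) = x := by
    intro x
    induction x with
    | zero => simp [inv]
    | tmul b h =>
        simp only [inv, psi_tmul, LinearMap.smul_apply, baseChange_tmul, map_smul]
        rw [← Finset.smul_sum, ← tmul_sum, sum_sjMap, smul_tmul', smul_eq_mul, mul_one]
    | add a b ha hb => rw [map_add, hadd, ha, hb]
  have right : ∀ φ, LinearMap.tensorProduct R B (Fin q → R) N (inv φ) = φ := by
    intro φ
    have key : ∀ ξ : Fin q → R,
        LinearMap.tensorProduct R B (Fin q → R) N (inv φ) ((1:B) ⊗ₜ ξ) = φ ((1:B) ⊗ₜ ξ) := by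
      intro ξ
      have hx : ((1:B) ⊗ₜ[R] ξ : B ⊗[R] (Fin q → R))
          = ∑ j, ξ j • ((1:B) ⊗ₜ[R] (Pi.single j 1 : Fin q → R)) := by
        conv_lhs => rw [single_sum q ξ]
        rw [tmul_sum]
        simp_rw [tmul_smul]
      simp only [inv, map_sum, LinearMap.sum_apply, psi_sjMap_apply]
      conv_rhs => rw [hx]
      rw [map_sum]
      simp
    apply LinearMap.ext
    intro t
    induction t with
    | zero => simp only [map_zero]
    | tmul b x =>
        have hb : (b ⊗ₜ x : B ⊗[R] (Fin q → R)) = b • ((1:B) ⊗ₜ x) := by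
          rw [smul_tmul', smul_eq_mul, mul_one]
        rw [hb, map_smul, map_smul, key]
    | add a b ha hb => simp only [map_add, ha, hb]
  constructor
  · intro x y hxy
    rw [← left x, ← left y, hxy]
  · intro φ
    exact ⟨inv φ, right φ⟩

variable {P : Type} [AddCommGroup P] [Module R P]

lemma psi_square (π : P →ₗ[R] M) (w : B ⊗[R] (M →ₗ[R] N)) :
    LinearMap.tensorProduct R B P N ((π.lcomp R N).baseChange B w) =
      (LinearMap.tensorProduct R B M N w) ∘ₗ π.baseChange B := by
  induction w with
  | zero => simp
  | tmul b h =>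
      simp only [baseChange_tmul, psi_tmul, lcomp_apply']
      rw [baseChange_comp, smul_comp]
  | add a b ha hb => simp only [map_add, ha, hb, add_comp]

lemma psi_injective [Module.Flat R B] [Module.Finite R M] :
    Function.Injective (LinearMap.tensorProduct R B M N) := by
  obtain ⟨q, ρ, hρ⟩ := Module.Finite.exists_fin' R M
  have hinj : Function.Injective (ρ.lcomp R N) := by
    intro g g' H
    apply LinearMap.ext
    intro y
    obtain ⟨x, rfl⟩ := hρ y
    exact LinearMap.congr_fun H x
  have hbc : Function.Injective ((ρ.lcomp R N).baseChange B) := by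
    rw [baseChange_eq_ltensor]
    exact Module.Flat.lTensor_preserves_injective_linearMap _ hinj
  intro t t' H
  apply hbc
  apply (psi_free_bijective B q).injective
  rw [psi_square, psi_square, H]

lemma psi_surjective [Module.Flat R B] [IsNoetherianRing R] [Module.Finite R M] :
    Function.Surjective (LinearMap.tensorProduct R B M N) := by
  obtain ⟨q, π, hπ⟩ := Module.Finite.exists_fin' R M
  set K := LinearMap.ker π with hK'
  haveI : Module.Finite R K := Module.Finite.iff_fg.mpr (IsNoetherian.noetherian K)
  set ι := K.subtype with hι'
  have hπι : π ∘ₗ ι = 0 := by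
    apply LinearMap.ext
    rintro ⟨x, hx⟩
    exact hx
  -- exactness downstairs
  have hex : Function.Exact (π.lcomp R N) (ι.lcomp R N) := by
    intro g
    constructor
    · intro hg
      have hKg : K ≤ LinearMap.ker g := by
        intro x hx
        exact LinearMap.congr_fun hg ⟨x, hx⟩
      set e := π.quotKerEquivOfSurjective hπ with he'
      have he : ∀ x, e (Submodule.Quotient.mk x) = π x := fun x => rfl
      refine ⟨(K.liftQ g hKg) ∘ₗ e.symm.toLinearMap, ?_⟩
      apply LinearMap.ext
      intro x
      have h2 : e.symm (π x) = Submodule.Quotient.mk x := by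
        apply e.injective; rw [he, LinearEquiv.apply_symm_apply]
      simp only [lcomp_apply', LinearMap.comp_apply, LinearEquiv.coe_coe, h2,
        Submodule.liftQ_apply]
    · rintro ⟨h, rfl⟩
      simp only [lcomp_apply', LinearMap.comp_assoc, hπι, LinearMap.comp_zero]
  have hexB : Function.Exact ((π.lcomp R N).baseChange B) ((ι.lcomp R N).baseChange B) := by
    rw [baseChange_eq_ltensor, baseChange_eq_ltensor]
    exact Module.Flat.lTensor_exact B hex
  have hπB : Function.Surjective (π.baseChange B) := by
    rw [baseChange_eq_ltensor]
    exact LinearMap.lTensor_surjective B hπ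
  intro φ
  obtain ⟨x, hx⟩ := (psi_free_bijective B q (N := N)).surjective (φ ∘ₗ π.baseChange B)
  have h1 : LinearMap.tensorProduct R B K N ((ι.lcomp R N).baseChange B x) = 0 := by
    rw [psi_square, hx, LinearMap.comp_assoc, ← baseChange_comp, hπι]
    simp
  have h2 : (ι.lcomp R N).baseChange B x = 0 := by
    apply psi_injective B
    rw [h1, map_zero]
  obtain ⟨w, hw⟩ := (hexB x).mp h2
  refine ⟨w, ?_⟩
  have hcomp : LinearMap.tensorProduct R B M N w ∘ₗ π.baseChange B = φ ∘ₗ π.baseChange B := by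
    rw [← psi_square, hw, hx]
  exact (LinearMap.cancel_right hπB).mp hcomp

end HomBaseChange

section AdicPart

variable {A : Type} [CommRing A] [IsNoetherianRing A] (I : Ideal A)

lemma smul_top_map {V W : Type} [AddCommGroup V] [Module A V] [AddCommGroup W] [Module A W]
    (f : V →ₗ[A] W) {v : V} (hv : v ∈ (I • ⊤ : Submodule A V)) :
    f v ∈ (I • ⊤ : Submodule A W) := by
  have h1 : f v ∈ Submodule.map f (I • ⊤) := Submodule.mem_map_of_mem hv
  rw [Submodule.map_smul''] at h1
  exact (smul_mono_right I (le_top : Submodule.map f ⊤ ≤ ⊤) :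
    I • Submodule.map f ⊤ ≤ (I • ⊤ : Submodule A W)) h1

lemma adic_map_of {M N : Type} [AddCommGroup M] [Module A M] [AddCommGroup N] [Module A N]
    (f : M →ₗ[A] N) (x : M) :
    AdicCompletion.map I f (AdicCompletion.of I M x) = AdicCompletion.of I N (f x) := by
  ext n
  simp [AdicCompletion.map_val_apply, AdicCompletion.of_apply, LinearMap.reduceModIdeal_apply]

lemma of_one : AdicCompletion.of I A (1 : A) = 1 := by
  ext n
  simp [AdicCompletion.of_apply, AdicCompletion.val_one]

lemma approx (b : AdicCompletion I A) :
    ∃ a : A, b - a • 1 ∈ (I • ⊤ : Submodule A (AdicCompletion I A)) := by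
  haveI : Module.Finite A I := Module.Finite.iff_fg.mpr (IsNoetherian.noetherian I)
  obtain ⟨a, ha⟩ := Submodule.Quotient.mk_surjective _ (AdicCompletion.eval I A 1 b)
  refine ⟨a, ?_⟩
  set b' := b - a • 1 with hb'
  have hval1 : b'.val 1 = 0 := by
    have h1 : (a • (1 : AdicCompletion I A)).val 1
        = Submodule.Quotient.mk (p := (I ^ 1 • ⊤ : Submodule A A)) a := by
      rw [AdicCompletion.val_smul_apply, AdicCompletion.val_one]
      rw [show (1 : A ⧸ (I ^ 1 • ⊤ : Submodule A A))
        = Submodule.Quotient.mk (p := (I ^ 1 • ⊤ : Submodule A A)) 1 from rfl]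
      rw [← Submodule.Quotient.mk_smul, show a • (1:A) = a from by rw [smul_eq_mul, mul_one]]
    rw [hb', AdicCompletion.val_sub_apply, h1, ← AdicCompletion.eval_apply, ← ha, sub_self]
  -- smul_top membership of I^1 • ⊤ in I
  have hsmul_le : (I ^ 1 • ⊤ : Submodule A A) ≤ I := by
    refine Submodule.smul_le.mpr fun r hr n _ => ?_
    rw [smul_eq_mul]
    exact Ideal.mul_mem_right n I (by simpa using hr)
  have hmapzero : AdicCompletion.map I (Submodule.mkQ I) b' = 0 := by
    ext n
    obtain ⟨x, hx⟩ := Submodule.Quotient.mk_surjective _ (b'.val n)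
    rw [AdicCompletion.map_val_apply, ← hx, LinearMap.reduceModIdeal_apply,
      AdicCompletion.val_zero_apply]
    cases n with
    | zero =>
        have htop : (I ^ 0 • ⊤ : Submodule A (A ⧸ I)) = ⊤ := by
          rw [pow_zero, Ideal.one_eq_top, Submodule.top_smul]
        rw [Submodule.Quotient.mk_eq_zero, htop]
        trivial
    | succ n =>
        have hx1 : b'.val 1 =
            Submodule.Quotient.mk (p := (I ^ 1 • ⊤ : Submodule A A)) x := by
          rw [← AdicCompletion.transitionMap_comp_eval_apply I A
            (show 1 ≤ n + 1 by omega) b']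
          rw [← hx]; rfl
        have hxI : x ∈ I := by
          apply hsmul_le
          rw [← Submodule.Quotient.mk_eq_zero, ← hx1, hval1]
        rw [Submodule.Quotient.mk_eq_zero]
        rw [show Submodule.mkQ I x = 0 from (Submodule.Quotient.mk_eq_zero _).mpr hxI]
        exact Submodule.zero_mem _
  have hexact := AdicCompletion.map_exact (I := I)
    (Submodule.injective_subtype I) (LinearMap.exact_subtype_mkQ I) (Submodule.mkQ_surjective I)
  obtain ⟨c, hc⟩ := (hexact b').mp hmapzero
  obtain ⟨t, ht⟩ := AdicCompletion.ofTensorProduct_surjective_of_finite I I c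
  rw [← hc, ← ht]
  clear hc ht
  induction t with
  | zero => simp
  | tmul β x =>
      rw [AdicCompletion.ofTensorProduct_tmul, map_smul, adic_map_of, Submodule.subtype_apply]
      have hofx : AdicCompletion.of I A (x : A) = (x : A) • 1 := by
        rw [← of_one I, ← map_smul, smul_eq_mul, mul_one]
      rw [hofx, smul_comm]
      exact Submodule.smul_mem_smul x.2 trivial
  | add u v hu hv =>
      rw [map_add, map_add]
      exact Submodule.add_mem _ hu hv

end AdicPart
section Main

variable {A : Type} [CommRing A] [IsNoetherianRing A] (I : Ideal A)
variable {M N : Type} [AddCommGroup M] [Module A M] [Module.Finite A M]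
    [AddCommGroup N] [Module A N] [Module.Finite A N]

set_option maxHeartbeats 1000000 in
lemma exists_surjective_of_completion_surjective
    (hI : I ≤ Ideal.jacobson ⊥)
    (g : AdicCompletion I A ⊗[A] M →ₗ[AdicCompletion I A] AdicCompletion I A ⊗[A] N)
    (hg : Function.Surjective g) :
    ∃ f : M →ₗ[A] N, Function.Surjective f := by
  set B := AdicCompletion I A with hB
  haveI : Module.Flat A B := AdicCompletion.flat_of_isNoetherian (I := I)
  obtain ⟨w, hw⟩ := psi_surjective (AdicCompletion I A) g
  -- decompose w as 1 ⊗ f + (I•⊤)-element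
  have hmem : w ∈ LinearMap.range (TensorProduct.mk A B (M →ₗ[A] N) 1)
      ⊔ (I • ⊤ : Submodule A (B ⊗[A] (M →ₗ[A] N))) := by
    have : ∀ t : B ⊗[A] (M →ₗ[A] N), t ∈ LinearMap.range (TensorProduct.mk A B (M →ₗ[A] N) 1)
        ⊔ (I • ⊤ : Submodule A (B ⊗[A] (M →ₗ[A] N))) := by
      intro t
      induction t with
      | zero => exact Submodule.zero_mem _
      | tmul b h =>
          obtain ⟨a, ha⟩ := approx I b
          have hsplit : (b ⊗ₜ h : B ⊗[A] (M →ₗ[A] N))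
              = (b - a • 1) ⊗ₜ h + a • ((1:B) ⊗ₜ h) := by
            rw [smul_tmul', sub_tmul]
            abel
          rw [hsplit]
          apply Submodule.add_mem
          · apply Submodule.mem_sup_right
            exact smul_top_map I ((TensorProduct.mk A B (M →ₗ[A] N)).flip h) ha
          · exact Submodule.mem_sup_left (Submodule.smul_mem _ a ⟨h, rfl⟩)
      | add u v hu hv => exact Submodule.add_mem _ hu hv
    exact this w
  obtain ⟨u, hu, ρ, hρ, huw⟩ := Submodule.mem_sup.mp hmem
  obtain ⟨f, rfl⟩ := hu
  refine ⟨f, ?_⟩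
  rw [← LinearMap.range_eq_top]
  have hsup : (⊤ : Submodule A N) ≤ LinearMap.range f ⊔ I • ⊤ := by
    intro y _
    obtain ⟨z, hz⟩ := hg ((1:B) ⊗ₜ y)
    set eM := AdicCompletion.ofTensorProductEquivOfFiniteNoetherian I M with heM
    set eN := AdicCompletion.ofTensorProductEquivOfFiniteNoetherian I N with heN
    set θ : B ⊗[A] N →ₗ[A] N ⧸ (I ^ 1 • ⊤ : Submodule A N) :=
      (AdicCompletion.eval I N 1) ∘ₗ (eN.toLinearMap.restrictScalars A) with hθ
    -- `χ` : A-linear evaluation at z of ψ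
    set χ : B ⊗[A] (M →ₗ[A] N) →ₗ[A] B ⊗[A] N :=
      { toFun := fun t => (LinearMap.tensorProduct A B M N t) z
        map_add' := fun s t => by rw [map_add, LinearMap.add_apply]
        map_smul' := fun a t => by
          rw [← algebraMap_smul B a t, map_smul, LinearMap.smul_apply, algebraMap_smul,
            RingHom.id_apply] } with hχ
    -- decomposition of 1 ⊗ y
    have hdecomp : ((1:B) ⊗ₜ y : B ⊗[A] N) = f.baseChange B z + χ ρ := by
      have h0 : (TensorProduct.mk A B (M →ₗ[A] N) 1) f + ρ = w := huw
      have h1 : LinearMap.tensorProduct A B M N ((TensorProduct.mk A B (M →ₗ[A] N) 1) f)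
          = f.baseChange B := by
        rw [show (TensorProduct.mk A B (M →ₗ[A] N) 1) f = (1:B) ⊗ₜ f from rfl, psi_tmul,
          one_smul]
      calc ((1:B) ⊗ₜ y : B ⊗[A] N) = g z := hz.symm
        _ = (LinearMap.tensorProduct A B M N w) z := by rw [hw]
        _ = (LinearMap.tensorProduct A B M N ((TensorProduct.mk A B (M →ₗ[A] N) 1) f)) z
              + (LinearMap.tensorProduct A B M N ρ) z := by
            rw [← h0, map_add, LinearMap.add_apply]
        _ = f.baseChange B z + χ ρ := by rw [h1]; rfl
    have hχρ : χ ρ ∈ (I • ⊤ : Submodule A (B ⊗[A] N)) := smul_top_map I χ hρ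
    -- θ kills I • ⊤
    have hbot : (I • ⊤ : Submodule A (N ⧸ (I ^ 1 • ⊤ : Submodule A N))) ≤ ⊥ := by
      refine Submodule.smul_le.mpr fun r hr m _ => ?_
      obtain ⟨n', rfl⟩ := Submodule.Quotient.mk_surjective _ m
      rw [← Submodule.Quotient.mk_smul]
      refine (Submodule.Quotient.mk_eq_zero _).mpr ?_
      rw [pow_one]
      exact Submodule.smul_mem_smul hr trivial
    have hθρ : θ (χ ρ) = 0 := by
      have := smul_top_map I θ hχρ
      simpa using hbot this
    have hθy : θ ((1:B) ⊗ₜ y) = Submodule.Quotient.mk y := by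
      rw [hθ]
      simp only [LinearMap.comp_apply, LinearMap.restrictScalars_apply, LinearEquiv.coe_coe, heN]
      rw [show (AdicCompletion.ofTensorProductEquivOfFiniteNoetherian I N) ((1:B) ⊗ₜ y)
          = AdicCompletion.ofTensorProduct I N ((1:B) ⊗ₜ y) from rfl,
        AdicCompletion.ofTensorProduct_tmul, one_smul, AdicCompletion.eval_of,
        Submodule.mkQ_apply]
    have hnat : ∀ t : B ⊗[A] M, eN (f.baseChange B t) = AdicCompletion.map I f (eM t) := by
      intro t
      induction t with
      | zero => simp
      | tmul b m =>
          rw [baseChange_tmul, heM, heN,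
            AdicCompletion.ofTensorProductEquivOfFiniteNoetherian_apply,
            AdicCompletion.ofTensorProductEquivOfFiniteNoetherian_apply,
            AdicCompletion.ofTensorProduct_tmul, AdicCompletion.ofTensorProduct_tmul,
            map_smul, adic_map_of]
      | add u v hu hv => simp only [map_add, hu, hv]
    obtain ⟨m, hm⟩ := Submodule.Quotient.mk_surjective _ ((eM z).val 1)
    have hθf : θ (f.baseChange B z) = Submodule.Quotient.mk (f m) := by
      rw [hθ]
      simp only [LinearMap.comp_apply, LinearMap.restrictScalars_apply, LinearEquiv.coe_coe]
      rw [hnat z, AdicCompletion.eval_apply, AdicCompletion.map_val_apply, ← hm,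
        LinearMap.reduceModIdeal_apply]
    have hyd : Submodule.Quotient.mk (p := (I ^ 1 • ⊤ : Submodule A N)) y
        = Submodule.Quotient.mk (f m) := by
      rw [← hθy, hdecomp, map_add, hθf, hθρ, add_zero]
    have hdiff : y - f m ∈ (I • ⊤ : Submodule A N) := by
      have := (Submodule.Quotient.eq _).mp hyd
      rwa [pow_one] at this
    have : y = f m + (y - f m) := by abel
    rw [this]
    exact Submodule.add_mem _ (Submodule.mem_sup_left ⟨m, rfl⟩) (Submodule.mem_sup_right hdiff)
  have hle := Submodule.le_of_le_smul_of_le_jacobson_bot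
    (Module.finite_def.mp inferInstance) hI hsup
  exact top_le_iff.mp hle

end Main

/-- Let `A` be a Noetherian local ring with maximal ideal `m`, and `M`, `N` finitely
generated `A`-modules.  If the `m`-adic completions of `M` and `N` are isomorphic as
modules over the completion of `A`, then `M ≅ N`. -/
theorem stmt_17 (A : Type) [CommRing A] [IsNoetherianRing A] [IsLocalRing A]
    (M N : Type) [AddCommGroup M] [Module A M] [Module.Finite A M]
    [AddCommGroup N] [Module A N] [Module.Finite A N]
    (h : Nonempty
      (AdicCompletion (IsLocalRing.maximalIdeal A) M
        ≃ₗ[AdicCompletion (IsLocalRing.maximalIdeal A) A]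
       AdicCompletion (IsLocalRing.maximalIdeal A) N)) :
    Nonempty (M ≃ₗ[A] N) := by
  obtain ⟨φ⟩ := h
  set I := IsLocalRing.maximalIdeal A with hI
  have hjac : I ≤ Ideal.jacobson ⊥ := IsLocalRing.maximalIdeal_le_jacobson ⊥
  let eM := AdicCompletion.ofTensorProductEquivOfFiniteNoetherian I M
  let eN := AdicCompletion.ofTensorProductEquivOfFiniteNoetherian I N
  let φ' := (eM.trans φ).trans eN.symm
  obtain ⟨f, hf⟩ := exists_surjective_of_completion_surjective I hjac
    φ'.toLinearMap φ'.surjective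
  let φ'' := (eN.trans φ.symm).trans eM.symm
  obtain ⟨g, hgsurj⟩ := exists_surjective_of_completion_surjective I hjac
    φ''.toLinearMap φ''.surjective
  have hgf : Function.Surjective (⇑(g ∘ₗ f)) := by
    rw [LinearMap.coe_comp]
    exact hgsurj.comp hf
  have hinj := OrzechProperty.injective_of_surjective_endomorphism (g ∘ₗ f) hgf
  have hfinj : Function.Injective f := by
    intro x y hxy
    exact hinj (by simp [LinearMap.comp_apply, hxy])
  exact ⟨LinearEquiv.ofBijective f ⟨hfinj, hf⟩⟩
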